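/- Let M be a Hilbert C*-module over A = ℂ^{m×m}, let {q_t}_{t∈T} be an orthonormal system in M, and let V be the closed submodule generated by {q_t}. Then for every v ∈ M the net Σ_{t∈T₀} q_t⟨q_t,v⟩ over finite subsets T₀ ⊆ T converges in norm to an element Pv ∈ V, and v − Pv is orthogonal to V; hence M = V + V^⊥. -/

import Mathlib

open scoped Matrix.Norms.L2Operator ComplexOrder

/-- A Hilbert C*-module over the C*-algebra `ℂ^{m×m}` of `m × m` complex matrices (with the
operator norm): a right module with a matrix-valued inner product inducing the norm of `M`. -/
structure HilbertModuleMat (m : ℕ) (M : Type*) [NormedAddCommGroup M] where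
  smul : M → Matrix (Fin m) (Fin m) ℂ → M
  inner : M → M → Matrix (Fin m) (Fin m) ℂ
  smul_add_vec : ∀ (u v : M) c, smul (u + v) c = smul u c + smul v c
  smul_add_alg : ∀ (u : M) c d, smul u (c + d) = smul u c + smul u d
  smul_mul : ∀ (u : M) c d, smul u (c * d) = smul (smul u c) d
  smul_one : ∀ u : M, smul u 1 = u
  inner_add_right : ∀ u v w : M, inner u (v + w) = inner u v + inner u w
  inner_smul_right : ∀ (u v : M) c, inner u (smul v c) = inner u v * c
  inner_conj : ∀ u v : M, inner v u = star (inner u v)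
  inner_self_posSemidef : ∀ u : M, (inner u u).PosSemidef
  inner_definite : ∀ u : M, inner u u = 0 → u = 0
  norm_eq : ∀ u : M, ‖u‖ = Real.sqrt ‖inner u u‖

/-- A vector `q` is *normalized* if `⟨q,q⟩` is a nonzero idempotent. -/
def HilbertModuleMat.Normalized {m : ℕ} {M : Type*} [NormedAddCommGroup M]
    (h : HilbertModuleMat m M) (q : M) : Prop :=
  h.inner q q ≠ 0 ∧ h.inner q q * h.inner q q = h.inner q q

/-- The closure of the `ℂ^{m×m}`-submodule spanned by a family `q : T → M`. -/
def spanClosureMat {m : ℕ} {M : Type*} [NormedAddCommGroup M] (h : HilbertModuleMat m M)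
    {T : Type*} (q : T → M) : Set M :=
  closure {v : M | ∃ (s : Finset T) (c : T → Matrix (Fin m) (Fin m) ℂ),
    v = ∑ t ∈ s, h.smul (q t) (c t)}

/-! ### Auxiliary matrix lemmas -/

open scoped Matrix

set_option maxHeartbeats 1000000

section MatrixAux

variable {m : ℕ}

theorem hm_entry_le (A : Matrix (Fin m) (Fin m) ℂ) (i j : Fin m) : ‖A i j‖ ≤ ‖A‖ := by
  classical
  set x : EuclideanSpace ℂ (Fin m) := (EuclideanSpace.equiv (Fin m) ℂ).symm (Pi.single j 1) with hx
  have h := A.l2_opNorm_mulVec x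
  have h1 : ‖x‖ = 1 := by
    simp [hx, EuclideanSpace.norm_eq, Pi.single_apply, apply_ite, Finset.sum_ite_eq']
  have hAx : A.mulVec x i = A i j := by
    simp [hx, Matrix.mulVec, dotProduct, Pi.single_apply, apply_ite, Finset.sum_ite_eq']
  have h2 : ‖A i j‖ ≤ ‖((EuclideanSpace.equiv (Fin m) ℂ).symm (A.mulVec x) : EuclideanSpace ℂ (Fin m))‖ := by
    rw [EuclideanSpace.norm_eq]
    rw [show ‖A i j‖ = Real.sqrt (‖A i j‖^2) from (Real.sqrt_sq (norm_nonneg _)).symm]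
    apply Real.sqrt_le_sqrt
    calc ‖A i j‖^2 = ‖A.mulVec x i‖^2 := by rw [hAx]
      _ ≤ ∑ k, ‖A.mulVec x k‖^2 :=
        Finset.single_le_sum (f := fun k => ‖A.mulVec x k‖^2) (fun k _ => sq_nonneg _)
          (Finset.mem_univ i)
      _ = _ := rfl
  calc ‖A i j‖ ≤ _ := h2
    _ ≤ ‖A‖ * ‖x‖ := h
    _ = ‖A‖ := by rw [h1, mul_one]

theorem hm_psd_diag_nonneg {A : Matrix (Fin m) (Fin m) ℂ} (hA : A.PosSemidef) (i : Fin m) :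
    0 ≤ A i i := by
  have := hA.dotProduct_mulVec_nonneg (Pi.single i 1)
  simpa [dotProduct, Pi.single_apply, apply_ite, Finset.sum_ite_eq'] using this

theorem hm_diag_re_le {A B : Matrix (Fin m) (Fin m) ℂ} (hAB : (B - A).PosSemidef) (i : Fin m) :
    (A i i).re ≤ (B i i).re := by
  have h' := (Complex.nonneg_iff.mp (hm_psd_diag_nonneg hAB i)).1
  simp only [Matrix.sub_apply, Complex.sub_re] at h'
  linarith

theorem hm_l2_le_frob (A : Matrix (Fin m) (Fin m) ℂ) :
    ‖A‖ ≤ Real.sqrt (∑ i, ∑ j, ‖A i j‖^2) := by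
  rw [Matrix.l2_opNorm_def]
  refine ContinuousLinearMap.opNorm_le_bound _ (Real.sqrt_nonneg _) fun x => ?_
  have hx : ‖x‖ = Real.sqrt (∑ j, ‖x j‖^2) := EuclideanSpace.norm_eq x
  have hAx : ∀ i, A.mulVec ((WithLp.equiv 2 (Fin m → ℂ)) x) i = ∑ j, A i j * x j := fun i => rfl
  have hfx : ‖(Matrix.toEuclideanLin.trans LinearMap.toContinuousLinearMap) A x‖
      = Real.sqrt (∑ i, ‖∑ j, A i j * x j‖^2) := by
    rw [show (Matrix.toEuclideanLin.trans LinearMap.toContinuousLinearMap) A x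
        = (WithLp.equiv 2 (Fin m → ℂ)).symm (A.mulVec ((WithLp.equiv 2 (Fin m → ℂ)) x)) from rfl]
    rw [EuclideanSpace.norm_eq]
    rfl
  rw [hfx, hx, ← Real.sqrt_mul (by positivity)]
  apply Real.sqrt_le_sqrt
  rw [Finset.sum_mul]
  refine Finset.sum_le_sum fun i _ => ?_
  calc ‖∑ j, A i j * x j‖^2 ≤ (∑ j, ‖A i j‖ * ‖x j‖)^2 := by
        have h1 : ‖∑ j, A i j * x j‖ ≤ ∑ j, ‖A i j‖ * ‖x j‖ := by
          refine (norm_sum_le _ _).trans ?_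
          exact Finset.sum_le_sum fun j _ => by rw [norm_mul]
        exact pow_le_pow_left₀ (norm_nonneg _) h1 2
    _ ≤ (∑ j, ‖A i j‖^2) * (∑ j, ‖x j‖^2) :=
        Finset.sum_mul_sq_le_sq_mul_sq _ _ _

theorem hm_psd_ofReal_smul {A : Matrix (Fin m) (Fin m) ℂ} (hA : A.PosSemidef) {c : ℝ}
    (hc : 0 ≤ c) : (((c : ℂ)) • A).PosSemidef := by
  refine Matrix.PosSemidef.of_dotProduct_mulVec_nonneg ?_ ?_
  · have : ((c:ℂ) • A)ᴴ = star (c:ℂ) • Aᴴ := Matrix.conjTranspose_smul _ _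
    rw [Matrix.IsHermitian, this, Complex.star_def, Complex.conj_ofReal, hA.1]
  · intro x
    have h0 := hA.dotProduct_mulVec_nonneg x
    have hz : dotProduct (star x) (((c:ℂ) • A).mulVec x)
        = (c:ℂ) * dotProduct (star x) (A.mulVec x) := by
      rw [Matrix.smul_mulVec, dotProduct_smul, smul_eq_mul]
    rw [hz]
    exact mul_nonneg (by exact_mod_cast hc) h0

theorem hm_psd_norm_smul_one_sub {A : Matrix (Fin m) (Fin m) ℂ} (hA : A.PosSemidef) :
    (((‖A‖ : ℝ) : ℂ) • 1 - A).PosSemidef := by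
  classical
  refine Matrix.PosSemidef.of_dotProduct_mulVec_nonneg ?_ ?_
  · have h1 : (((‖A‖ : ℝ):ℂ) • (1 : Matrix (Fin m) (Fin m) ℂ) - A)ᴴ
        = star ((‖A‖ : ℝ):ℂ) • (1 : Matrix (Fin m) (Fin m) ℂ)ᴴ - Aᴴ := by
      rw [Matrix.conjTranspose_sub, Matrix.conjTranspose_smul]
    rw [Matrix.IsHermitian, h1, Complex.star_def, Complex.conj_ofReal, Matrix.conjTranspose_one,
      hA.1]
  · intro x
    set y : EuclideanSpace ℂ (Fin m) := (WithLp.equiv 2 (Fin m → ℂ)).symm x with hy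
    have hz := hA.dotProduct_mulVec_nonneg x
    set z := dotProduct (star x) (A.mulVec x) with hzdef
    have hzre : z = ((z.re : ℝ) : ℂ) := by
      have := (Complex.nonneg_iff.mp hz).2
      exact Complex.ext rfl (by simp [← this])
    have hinner : (inner ℂ y ((WithLp.equiv 2 (Fin m → ℂ)).symm (A.mulVec x)) : ℂ) = z := by
      rw [hy, WithLp.equiv_symm_apply, EuclideanSpace.inner_toLp_toLp, dotProduct_comm]
    have hzbound : z.re ≤ ‖A‖ * (‖y‖^2) := by
      have h1 : ‖(inner ℂ y ((WithLp.equiv 2 (Fin m → ℂ)).symm (A.mulVec x)) : ℂ)‖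
          ≤ ‖y‖ * ‖((WithLp.equiv 2 (Fin m → ℂ)).symm (A.mulVec x) : EuclideanSpace ℂ (Fin m))‖ :=
        norm_inner_le_norm _ _
      have h2 : ‖((WithLp.equiv 2 (Fin m → ℂ)).symm (A.mulVec x) : EuclideanSpace ℂ (Fin m))‖
          ≤ ‖A‖ * ‖y‖ := by
        have := A.l2_opNorm_mulVec y
        simpa [hy] using this
      have h3 : z.re ≤ ‖z‖ := Complex.re_le_norm z
      calc z.re ≤ ‖z‖ := h3
        _ = ‖(inner ℂ y ((WithLp.equiv 2 (Fin m → ℂ)).symm (A.mulVec x)) : ℂ)‖ := by rw [hinner]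
        _ ≤ ‖y‖ * (‖A‖ * ‖y‖) := h1.trans (by
            exact mul_le_mul_of_nonneg_left h2 (norm_nonneg _))
        _ = ‖A‖ * ‖y‖^2 := by ring
    have hxx : dotProduct (star x) x = ((‖y‖^2 : ℝ) : ℂ) := by
      have : (inner ℂ y y : ℂ) = dotProduct (star x) x := by
        rw [hy, WithLp.equiv_symm_apply, EuclideanSpace.inner_toLp_toLp, dotProduct_comm]
      rw [← this, inner_self_eq_norm_sq_to_K]
      norm_cast
    have hexp : dotProduct (star x) (((((‖A‖ : ℝ):ℂ) • 1 - A)).mulVec x)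
        = ((‖A‖ : ℝ):ℂ) * dotProduct (star x) x - z := by
      rw [Matrix.sub_mulVec, dotProduct_sub, Matrix.smul_mulVec,
        dotProduct_smul, Matrix.one_mulVec, smul_eq_mul, hzdef]
    rw [hexp, hxx]
    have : ((‖A‖:ℝ):ℂ) * ((‖y‖^2 : ℝ):ℂ) - z = (((‖A‖ * ‖y‖^2 - z.re : ℝ)) : ℂ) := by
      rw [hzre]; norm_cast
    rw [this]
    rw [show (0 : ℂ) = ((0:ℝ):ℂ) from rfl, Complex.real_le_real]
    linarith

theorem hm_diag_re (b : Matrix (Fin m) (Fin m) ℂ) (i : Fin m) :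
    ((star b * b) i i).re = ∑ k, ‖b k i‖^2 := by
  rw [Matrix.star_eq_conjTranspose, Matrix.mul_apply, Complex.re_sum]
  refine Finset.sum_congr rfl fun k _ => ?_
  rw [Matrix.conjTranspose_apply, Complex.star_def, Complex.mul_re]
  simp [Complex.sq_norm, Complex.normSq_apply]

theorem hm_norm_sq_le_sumdiag (b : Matrix (Fin m) (Fin m) ℂ) :
    ‖b‖^2 ≤ ∑ i, ((star b * b) i i).re := by
  have h1 : ‖b‖^2 ≤ ∑ i, ∑ j, ‖b i j‖^2 := by
    have h2 := hm_l2_le_frob b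
    have h3 : 0 ≤ ∑ i, ∑ j, ‖b i j‖^2 := by positivity
    calc ‖b‖^2 ≤ (Real.sqrt (∑ i, ∑ j, ‖b i j‖^2))^2 :=
          pow_le_pow_left₀ (norm_nonneg _) h2 2
      _ = _ := Real.sq_sqrt h3
  calc ‖b‖^2 ≤ ∑ i, ∑ j, ‖b i j‖^2 := h1
    _ = ∑ j, ∑ i, ‖b i j‖^2 := Finset.sum_comm
    _ = ∑ i, ((star b * b) i i).re := by
        refine Finset.sum_congr rfl fun i _ => ?_
        rw [hm_diag_re]

end MatrixAux

/-! ### Auxiliary Hilbert-module lemmas -/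

namespace HilbertModuleMat

variable {m : ℕ} {M : Type*} [NormedAddCommGroup M] (h : HilbertModuleMat m M)

/-- `h.inner u ·` as an additive monoid hom. -/
def innerAdd (u : M) : M →+ Matrix (Fin m) (Fin m) ℂ :=
  AddMonoidHom.mk' (h.inner u) (h.inner_add_right u)

lemma inner_zero_right (u : M) : h.inner u 0 = 0 := map_zero (h.innerAdd u)

lemma inner_sub_right (u x y : M) : h.inner u (x - y) = h.inner u x - h.inner u y :=
  map_sub (h.innerAdd u) x y

lemma inner_sum_right {ι : Type*} (u : M) (s : Finset ι) (f : ι → M) :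
    h.inner u (∑ t ∈ s, f t) = ∑ t ∈ s, h.inner u (f t) :=
  map_sum (h.innerAdd u) f s

lemma inner_zero_left (u : M) : h.inner 0 u = 0 := by
  rw [h.inner_conj u 0, h.inner_zero_right, star_zero]

lemma inner_add_left (x y u : M) : h.inner (x + y) u = h.inner x u + h.inner y u := by
  rw [h.inner_conj u (x + y), h.inner_add_right, star_add, ← h.inner_conj u x,
    ← h.inner_conj u y]

lemma inner_sub_left (x y u : M) : h.inner (x - y) u = h.inner x u - h.inner y u := by
  rw [h.inner_conj u (x - y), h.inner_sub_right, star_sub, ← h.inner_conj u x,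
    ← h.inner_conj u y]

lemma inner_smul_left (x u : M) (c : Matrix (Fin m) (Fin m) ℂ) :
    h.inner (h.smul x c) u = star c * h.inner x u := by
  rw [h.inner_conj u (h.smul x c), h.inner_smul_right, star_mul, ← h.inner_conj u x]

lemma norm_sq (u : M) : ‖u‖ ^ 2 = ‖h.inner u u‖ := by
  rw [h.norm_eq, Real.sq_sqrt (norm_nonneg _)]

/-- Cauchy–Schwarz with a dimensional constant. -/
theorem cauchySchwarz (u w : M) : ‖h.inner u w‖ ≤ Real.sqrt m * ‖u‖ * ‖w‖ := by
  by_cases h0 : h.inner u u = 0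
  · have hu : u = 0 := h.inner_definite u h0
    rw [hu, h.inner_zero_left, norm_zero]
    positivity
  set A0 := h.inner u u with hA0
  set b := h.inner u w with hb
  set W := h.inner w w with hW
  set r : ℝ := ‖A0‖ with hr
  have hrpos : 0 < r := norm_pos_iff.2 h0
  set s : ℝ := r⁻¹ with hs
  have hspos : 0 < s := inv_pos.2 hrpos
  set G := star b * b with hG
  set H := star b * A0 * b with hH
  have psd1 : ((r : ℂ) • G - H).PosSemidef := by
    have h1 := (hm_psd_norm_smul_one_sub (h.inner_self_posSemidef u)).conjTranspose_mul_mul_same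
      (B := b)
    have h2 : bᴴ * (((r : ℝ) : ℂ) • 1 - A0) * b = (r : ℂ) • G - H := by
      rw [Matrix.mul_sub, Matrix.sub_mul, mul_smul_comm, smul_mul_assoc, mul_one, hG, hH,
        Matrix.star_eq_conjTranspose]
    rwa [h2] at h1
  set cc : Matrix (Fin m) (Fin m) ℂ := (-(s : ℂ)) • b with hcc
  have hstarcc : star cc = (-(s : ℂ)) • star b := by
    rw [hcc, star_smul]
    congr 1
    simp [Complex.star_def, Complex.conj_ofReal]
  have hE : h.inner (h.smul u cc + w) (h.smul u cc + w)
      = ((s * s : ℝ) : ℂ) • H + (-((s : ℂ) • G)) + (-((s : ℂ) • G)) + W := by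
    rw [h.inner_add_left, h.inner_add_right, h.inner_add_right]
    have e1 : h.inner (h.smul u cc) (h.smul u cc) = ((s * s : ℝ) : ℂ) • H := by
      rw [h.inner_smul_left, h.inner_smul_right, hstarcc, hcc]
      simp only [smul_mul_assoc, mul_smul_comm, smul_smul]
      rw [hH, Matrix.mul_assoc]
      congr 1
      push_cast
      ring
    have e2 : h.inner (h.smul u cc) w = -((s : ℂ) • G) := by
      rw [h.inner_smul_left, hstarcc, smul_mul_assoc, ← hb, hG, neg_smul]
    have e3 : h.inner w (h.smul u cc) = -((s : ℂ) • G) := by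
      rw [h.inner_smul_right, h.inner_conj u w, hcc, mul_smul_comm, ← hb, hG, neg_smul]
    rw [e1, e2, e3, ← hW]
    abel
  have psd3 := (h.inner_self_posSemidef (h.smul u cc + w)).add
    (hm_psd_ofReal_smul psd1 (mul_nonneg hspos.le hspos.le))
  have hscal : ((s * s : ℝ) : ℂ) • ((r : ℂ) • G) = (s : ℂ) • G := by
    rw [smul_smul]
    congr 1
    rw [← Complex.ofReal_mul]
    have hss : s * s * r = s := by rw [hs]; field_simp
    rw [hss]
  have hid : h.inner (h.smul u cc + w) (h.smul u cc + w) + ((s * s : ℝ) : ℂ) • ((r : ℂ) • G - H)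
      = W - (s : ℂ) • G := by
    rw [hE, smul_sub, hscal]
    abel
  rw [hid] at psd3
  have hdiag : ∀ i, s * ((G i i).re) ≤ (W i i).re := by
    intro i
    have h1 := hm_diag_re_le psd3 i
    have h2 : (((s : ℂ) • G) i i).re = s * (G i i).re := by
      rw [Matrix.smul_apply, smul_eq_mul, Complex.re_ofReal_mul]
    rw [h2] at h1
    exact h1
  have hWdiag : ∀ i, (W i i).re ≤ ‖W‖ := fun i =>
    (Complex.re_le_norm _).trans (hm_entry_le W i i)
  have hsum : s * (∑ i, (G i i).re) ≤ (m : ℝ) * ‖W‖ := by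
    rw [Finset.mul_sum]
    calc ∑ i, s * (G i i).re ≤ ∑ i : Fin m, (W i i).re := Finset.sum_le_sum fun i _ => hdiag i
      _ ≤ ∑ _i : Fin m, ‖W‖ := Finset.sum_le_sum fun i _ => hWdiag i
      _ = (m : ℝ) * ‖W‖ := by simp [mul_comm]
  have hGsum : ∑ i, (G i i).re ≤ r * ((m : ℝ) * ‖W‖) := by
    have h6 := mul_le_mul_of_nonneg_left hsum hrpos.le
    calc ∑ i, (G i i).re = r * (s * ∑ i, (G i i).re) := by
          rw [hs, ← mul_assoc, mul_inv_cancel₀ hrpos.ne', one_mul]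
      _ ≤ r * ((m:ℝ) * ‖W‖) := h6
  have hb2 : ‖b‖^2 ≤ (m : ℝ) * (‖u‖^2 * ‖w‖^2) := by
    have h1 : ‖b‖^2 ≤ ∑ i, (G i i).re := by
      have := hm_norm_sq_le_sumdiag b
      rw [← hG] at this
      exact this
    have h2 : r = ‖u‖^2 := by rw [hr, hA0, ← h.norm_sq]
    have h3 : ‖W‖ = ‖w‖^2 := by rw [hW, ← h.norm_sq]
    calc ‖b‖^2 ≤ r * ((m:ℝ) * ‖W‖) := h1.trans hGsum
      _ = (m : ℝ) * (‖u‖^2 * ‖w‖^2) := by rw [h2, h3]; ring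
  have h4 : ‖b‖ = Real.sqrt (‖b‖^2) := (Real.sqrt_sq (norm_nonneg _)).symm
  rw [h4]
  have h5 : Real.sqrt m * ‖u‖ * ‖w‖ = Real.sqrt ((m:ℝ) * (‖u‖^2 * ‖w‖^2)) := by
    rw [Real.sqrt_mul (Nat.cast_nonneg m), Real.sqrt_mul (sq_nonneg _), Real.sqrt_sq
      (norm_nonneg _), Real.sqrt_sq (norm_nonneg _), mul_assoc]
  rw [h5]
  exact Real.sqrt_le_sqrt hb2

theorem continuous_inner_right (u : M) : Continuous fun w => h.inner u w := by
  have lip : LipschitzWith (Real.toNNReal (Real.sqrt m * ‖u‖)) (fun w => h.inner u w) := by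
    apply LipschitzWith.of_dist_le_mul
    intro x y
    rw [dist_eq_norm, dist_eq_norm, ← h.inner_sub_right]
    calc ‖h.inner u (x - y)‖ ≤ Real.sqrt m * ‖u‖ * ‖x - y‖ := h.cauchySchwarz u (x - y)
      _ ≤ (Real.toNNReal (Real.sqrt m * ‖u‖) : ℝ) * ‖x - y‖ :=
        mul_le_mul_of_nonneg_right (Real.le_coe_toNNReal _) (norm_nonneg _)
  exact lip.continuous

end HilbertModuleMat

/-! ### Main theorem -/

/-- Over `ℂ^{m×m}`, for every `v` the net of finite partial sums `Σ q_t⟨q_t,v⟩` converges to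
some `Pv` in the closed span `V` of the orthonormal system, and `v − Pv ⊥ V`; hence
`M = V + V^⊥`. -/
theorem projection_exists_and_orthogonal_complement
    {m : ℕ} {M : Type*} [NormedAddCommGroup M] [CompleteSpace M]
    (h : HilbertModuleMat m M)
    {T : Type*} (q : T → M)
    (horth : ∀ s t, s ≠ t → h.inner (q s) (q t) = 0)
    (hnorm : ∀ t, h.Normalized (q t)) :
    ∀ v : M, ∃ Pv : M,
      Pv ∈ spanClosureMat h q ∧
      HasSum (fun t => h.smul (q t) (h.inner (q t) v)) Pv ∧
      (∀ w ∈ spanClosureMat h q, h.inner (v - Pv) w = 0) := by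
  classical
  intro v
  set p : T → Matrix (Fin m) (Fin m) ℂ := fun t => h.inner (q t) (q t) with hp
  set c : T → Matrix (Fin m) (Fin m) ℂ := fun t => h.inner (q t) v with hc
  set g : T → M := fun t => h.smul (q t) (c t) with hg
  have hp_idem : ∀ t, p t * p t = p t := fun t => (hnorm t).2
  have hp_star : ∀ t, star (p t) = p t := fun t => by
    rw [hp, Matrix.star_eq_conjTranspose]
    exact (h.inner_self_posSemidef (q t)).1
  -- `q t • p t = q t`
  have hqp : ∀ t, h.smul (q t) (p t) = q t := by
    intro t
    have i1 : h.inner (q t) (h.smul (q t) (p t)) = p t := by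
      rw [h.inner_smul_right]
      exact hp_idem t
    have i2 : h.inner (h.smul (q t) (p t)) (q t) = p t := by
      rw [h.inner_smul_left, hp_star]
      exact hp_idem t
    have i3 : h.inner (h.smul (q t) (p t)) (h.smul (q t) (p t)) = p t := by
      rw [h.inner_smul_left, i1, hp_star, hp_idem]
    have hz : h.inner (q t - h.smul (q t) (p t)) (q t - h.smul (q t) (p t)) = 0 := by
      rw [h.inner_sub_left, h.inner_sub_right, h.inner_sub_right, i1, i2, i3]
      show p t - p t - (p t - p t) = 0
      simp
    have := h.inner_definite _ hz
    rw [sub_eq_zero] at this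
    exact this.symm
  have hpc : ∀ t, p t * c t = c t := by
    intro t
    have h1 : h.inner (h.smul (q t) (p t)) v = h.inner (q t) v := by rw [hqp]
    rw [h.inner_smul_left, hp_star] at h1
    exact h1
  -- inner of a vector with a finite combination
  have hinner_to_sum : ∀ (u : M) (F : Finset T) (d : T → Matrix (Fin m) (Fin m) ℂ),
      h.inner u (∑ t ∈ F, h.smul (q t) (d t)) = ∑ t ∈ F, h.inner u (q t) * d t := by
    intro u F d
    rw [h.inner_sum_right]
    exact Finset.sum_congr rfl fun t _ => h.inner_smul_right _ _ _
  have hqtS : ∀ (t : T) (F : Finset T), t ∈ F → h.inner (q t) (∑ s ∈ F, g s) = c t := by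
    intro t F ht
    rw [hinner_to_sum]
    rw [Finset.sum_eq_single t]
    · exact hpc t
    · intro s hs hst
      rw [horth t s (Ne.symm hst), zero_mul]
    · intro h'
      exact absurd ht h'
  have hSS : ∀ F : Finset T, h.inner (∑ t ∈ F, g t) (∑ t ∈ F, g t)
      = ∑ t ∈ F, star (c t) * c t := by
    intro F
    rw [hinner_to_sum]
    refine Finset.sum_congr rfl fun t ht => ?_
    rw [h.inner_conj (q t) (∑ s ∈ F, g s), hqtS t F ht]
  have hvS : ∀ F : Finset T, h.inner v (∑ t ∈ F, g t) = ∑ t ∈ F, star (c t) * c t := by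
    intro F
    rw [hinner_to_sum]
    refine Finset.sum_congr rfl fun t _ => ?_
    rw [h.inner_conj (q t) v]
  have hSv : ∀ F : Finset T, h.inner (∑ t ∈ F, g t) v = ∑ t ∈ F, star (c t) * c t := by
    intro F
    rw [h.inner_conj v (∑ t ∈ F, g t), hvS, star_sum]
    refine Finset.sum_congr rfl fun t _ => ?_
    rw [star_mul, star_star]
  have hBess : ∀ F : Finset T, h.inner (v - ∑ t ∈ F, g t) (v - ∑ t ∈ F, g t)
      = h.inner v v - ∑ t ∈ F, star (c t) * c t := by
    intro F
    rw [h.inner_sub_left, h.inner_sub_right, h.inner_sub_right, hvS, hSv, hSS]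
    abel
  have psdF : ∀ F : Finset T, (h.inner v v - ∑ t ∈ F, star (c t) * c t).PosSemidef := by
    intro F
    rw [← hBess]
    exact h.inner_self_posSemidef _
  -- the real "trace" series
  set f : T → ℝ := fun t => ∑ i, ((star (c t) * c t) i i).re with hf
  have hf0 : ∀ t, 0 ≤ f t := by
    intro t
    refine Finset.sum_nonneg fun i _ => ?_
    rw [hm_diag_re]
    positivity
  have hfbdd : ∀ F : Finset T, ∑ t ∈ F, f t ≤ ∑ i, ((h.inner v v) i i).re := by
    intro F
    have e1 : ∑ t ∈ F, f t = ∑ i, ((∑ t ∈ F, star (c t) * c t) i i).re := by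
      rw [hf]
      rw [Finset.sum_comm]
      refine Finset.sum_congr rfl fun i _ => ?_
      rw [Matrix.sum_apply, Complex.re_sum]
    rw [e1]
    exact Finset.sum_le_sum fun i _ => hm_diag_re_le (psdF F) i
  have hfs : Summable f := summable_of_sum_le hf0 hfbdd
  -- summability of the main series
  have hgs : Summable g := by
    rw [summable_iff_vanishing_norm]
    intro ε hε
    obtain ⟨s0, hs0⟩ := summable_iff_vanishing_norm.1 hfs (ε^2) (by positivity)
    refine ⟨s0, fun F hF => ?_⟩
    have e1 : ‖∑ t ∈ F, g t‖^2 = ‖∑ t ∈ F, star (c t) * c t‖ := by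
      rw [h.norm_sq, hSS]
    have e2 : ‖∑ t ∈ F, star (c t) * c t‖ ≤ ∑ t ∈ F, f t := by
      refine (norm_sum_le _ _).trans (Finset.sum_le_sum fun t _ => ?_)
      have hn : ‖star (c t) * c t‖ = ‖c t‖^2 := by
        rw [CStarRing.norm_star_mul_self, sq]
      rw [hn]
      exact hm_norm_sq_le_sumdiag (c t)
    have e3 : ∑ t ∈ F, f t ≤ ‖∑ t ∈ F, f t‖ := le_abs_self _
    have e4 : ‖∑ t ∈ F, f t‖ < ε^2 := hs0 F hF
    have e5 : ‖∑ t ∈ F, g t‖^2 < ε^2 := by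
      rw [e1]
      exact lt_of_le_of_lt (e2.trans e3) e4
    exact lt_of_pow_lt_pow_left₀ 2 hε.le e5
  set Pv : M := ∑' t, g t with hPv
  have hhas : HasSum g Pv := hgs.hasSum
  have htend : Filter.Tendsto (fun F : Finset T => ∑ t ∈ F, g t) Filter.atTop (nhds Pv) := hhas
  refine ⟨Pv, ?_, ?_, ?_⟩
  · rw [spanClosureMat]
    exact mem_closure_of_tendsto htend (Filter.Eventually.of_forall fun F => ⟨F, c, rfl⟩)
  · exact hhas
  · -- orthogonality
    have hqPv : ∀ t, h.inner (q t) Pv = c t := by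
      intro t
      have hcont := h.continuous_inner_right (q t)
      have h1 : Filter.Tendsto (fun F : Finset T => h.inner (q t) (∑ s ∈ F, g s))
          Filter.atTop (nhds (h.inner (q t) Pv)) := (hcont.tendsto Pv).comp htend
      have h2 : (fun F : Finset T => h.inner (q t) (∑ s ∈ F, g s)) =ᶠ[Filter.atTop]
          (fun _ => c t) := by
        filter_upwards [Filter.eventually_ge_atTop ({t} : Finset T)] with F hF
        exact hqtS t F (Finset.singleton_subset_iff.mp hF)
      have h3 : Filter.Tendsto (fun F : Finset T => h.inner (q t) (∑ s ∈ F, g s))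
          Filter.atTop (nhds (c t)) := Filter.Tendsto.congr' h2.symm tendsto_const_nhds
      exact tendsto_nhds_unique h1 h3
    have horthPv : ∀ t, h.inner (v - Pv) (q t) = 0 := by
      intro t
      rw [h.inner_sub_left, h.inner_conj (q t) v, h.inner_conj (q t) Pv, hqPv t]
      exact sub_self (star (c t))
    intro w hw
    have hcont := h.continuous_inner_right (v - Pv)
    have hclosed : IsClosed {w : M | h.inner (v - Pv) w = 0} :=
      isClosed_eq hcont continuous_const
    have hsub : {w : M | ∃ (s : Finset T) (d : T → Matrix (Fin m) (Fin m) ℂ),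
        w = ∑ t ∈ s, h.smul (q t) (d t)} ⊆ {w : M | h.inner (v - Pv) w = 0} := by
      rintro w ⟨F, d, rfl⟩
      rw [Set.mem_setOf_eq, hinner_to_sum]
      exact Finset.sum_eq_zero fun t _ => by rw [horthPv t, zero_mul]
    rw [spanClosureMat] at hw
    exact closure_minimal hsub hclosed hw
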